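/- Let $f_1, f_2:\mathbb{R}\to\mathbb{R}$ be continuous functions with $f_1(y) < f_2(y)$ for all $y\in\mathbb{R}$, let $\alpha_1,\alpha_2:[0,\infty)\to\mathbb{R}$ be continuous with $\alpha_1(t)\le\alpha_2(t)$ for all $t\ge 0$, let $g:[0,\infty)\to\mathbb{R}$ be continuous, and let $Y_0\in\mathbb{R}$. If $Y_1,Y_2:[0,\infty)\to\mathbb{R}$ are continuous functions satisfying $Y_i(t) = Y_0 + \int_0^t f_i(Y_i(s))\,ds + \int_0^t \alpha_i(s)\,ds + g(t)$ for all $t\ge 0$ and $i=1,2$, then $Y_1(t) < Y_2(t)$ for all $t > 0$. -/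
import Mathlib


open Filter Topology MeasureTheory Set

lemma slope_pos_right {F : ℝ → ℝ} {x d : ℝ} (hd : HasDerivAt F d x) (h0 : F x = 0)
    (hpos : 0 < d) : ∀ᶠ s in 𝓝[>] x, 0 < F s := by
  have h := hasDerivAt_iff_tendsto_slope.1 hd
  have h1 : ∀ᶠ s in 𝓝[≠] x, 0 < slope F x s := h.eventually (eventually_gt_nhds hpos)
  have h2 : ∀ᶠ s in 𝓝[>] x, 0 < slope F x s :=
    h1.filter_mono (nhdsWithin_mono x (fun s hs => ne_of_gt hs))
  filter_upwards [h2, self_mem_nhdsWithin] with s hs hxs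
  have hsx : (0:ℝ) < s - x := sub_pos.2 hxs
  have := mul_pos hs hsx
  rw [slope_def_field, div_mul_cancel₀ _ (ne_of_gt hsx)] at this
  linarith

lemma slope_neg_left {F : ℝ → ℝ} {x d : ℝ} (hd : HasDerivAt F d x) (h0 : F x = 0)
    (hpos : 0 < d) : ∀ᶠ s in 𝓝[<] x, F s < 0 := by
  have h := hasDerivAt_iff_tendsto_slope.1 hd
  have h1 : ∀ᶠ s in 𝓝[≠] x, 0 < slope F x s := h.eventually (eventually_gt_nhds hpos)
  have h2 : ∀ᶠ s in 𝓝[<] x, 0 < slope F x s :=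
    h1.filter_mono (nhdsWithin_mono x (fun s hs => ne_of_lt hs))
  filter_upwards [h2, self_mem_nhdsWithin] with s hs hxs
  have hsx : s - x < 0 := sub_neg.2 hxs
  have := mul_neg_of_pos_of_neg hs hsx
  rw [slope_def_field, div_mul_cancel₀ _ (ne_of_lt hsx)] at this
  linarith

/-- Pathwise comparison lemma with strict inequality of drifts. -/
theorem comparison_lemma_strict
    (f₁ f₂ : ℝ → ℝ) (hf₁ : Continuous f₁) (hf₂ : Continuous f₂)
    (hff : ∀ y : ℝ, f₁ y < f₂ y)
    (α₁ α₂ : ℝ → ℝ) (hα₁ : Continuous α₁) (hα₂ : Continuous α₂)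
    (hαα : ∀ t : ℝ, 0 ≤ t → α₁ t ≤ α₂ t)
    (g : ℝ → ℝ) (hg : Continuous g) (Y₀ : ℝ)
    (Y₁ Y₂ : ℝ → ℝ) (hY₁ : Continuous Y₁) (hY₂ : Continuous Y₂)
    (heq₁ : ∀ t : ℝ, 0 ≤ t →
      Y₁ t = Y₀ + (∫ s in (0:ℝ)..t, f₁ (Y₁ s)) + (∫ s in (0:ℝ)..t, α₁ s) + g t)
    (heq₂ : ∀ t : ℝ, 0 ≤ t →
      Y₂ t = Y₀ + (∫ s in (0:ℝ)..t, f₂ (Y₂ s)) + (∫ s in (0:ℝ)..t, α₂ s) + g t) :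
    ∀ t : ℝ, 0 < t → Y₁ t < Y₂ t := by
  set φ : ℝ → ℝ := fun s => f₂ (Y₂ s) - f₁ (Y₁ s) + (α₂ s - α₁ s) with hφdef
  have hφc : Continuous φ := ((hf₂.comp hY₂).sub (hf₁.comp hY₁)).add (hα₂.sub hα₁)
  set F : ℝ → ℝ := fun t => ∫ s in (0:ℝ)..t, φ s with hFdef
  have hFd : ∀ t : ℝ, HasDerivAt F (φ t) t := fun t =>
    intervalIntegral.integral_hasDerivAt_right (hφc.intervalIntegrable 0 t)
      (hφc.stronglyMeasurableAtFilter _ _) hφc.continuousAt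
  have hFc : Continuous F := continuous_iff_continuousAt.2 fun t => (hFd t).continuousAt
  have hFeq : ∀ t : ℝ, 0 ≤ t → F t = Y₂ t - Y₁ t := by
    intro t ht
    have h1 : IntervalIntegrable (fun s => f₁ (Y₁ s)) volume 0 t :=
      (hf₁.comp hY₁).intervalIntegrable 0 t
    have h2 : IntervalIntegrable (fun s => f₂ (Y₂ s)) volume 0 t :=
      (hf₂.comp hY₂).intervalIntegrable 0 t
    have h3 : IntervalIntegrable α₁ volume 0 t := hα₁.intervalIntegrable 0 t
    have h4 : IntervalIntegrable α₂ volume 0 t := hα₂.intervalIntegrable 0 t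
    have : F t = (∫ s in (0:ℝ)..t, f₂ (Y₂ s)) - (∫ s in (0:ℝ)..t, f₁ (Y₁ s))
        + ((∫ s in (0:ℝ)..t, α₂ s) - (∫ s in (0:ℝ)..t, α₁ s)) := by
      show (∫ s in (0:ℝ)..t, (f₂ (Y₂ s) - f₁ (Y₁ s) + (α₂ s - α₁ s))) = _
      rw [intervalIntegral.integral_add (h2.sub h1) (h4.sub h3),
        intervalIntegral.integral_sub h2 h1, intervalIntegral.integral_sub h4 h3]
    rw [this, heq₁ t ht, heq₂ t ht]; ring
  have hφpos : ∀ t : ℝ, 0 ≤ t → F t = 0 → 0 < φ t := by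
    intro t ht h0
    have hY : Y₂ t = Y₁ t := by have := hFeq t ht; linarith
    have := hff (Y₁ t)
    have := hαα t ht
    show 0 < f₂ (Y₂ t) - f₁ (Y₁ t) + (α₂ t - α₁ t)
    rw [hY]; linarith
  intro t ht
  by_contra hcon
  push_neg at hcon
  have hFt : F t ≤ 0 := by have := hFeq t ht.le; linarith
  have hF0 : F 0 = 0 := by simp [hFdef]
  have hε : ∀ᶠ s in 𝓝[>] (0:ℝ), 0 < F s :=
    slope_pos_right (hFd 0) hF0 (hφpos 0 le_rfl hF0)
  obtain ⟨u, hu, hsub⟩ := mem_nhdsGT_iff_exists_Ioo_subset.1 hε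
  rw [mem_Ioi] at hu
  set a : ℝ := min (u / 2) (t / 2) with hadef
  have ha0 : 0 < a := lt_min (by linarith) (by linarith)
  have hau : a < u := lt_of_le_of_lt (min_le_left _ _) (by linarith)
  have hat : a < t := lt_of_le_of_lt (min_le_right _ _) (by linarith)
  have hFa : 0 < F a := hsub ⟨ha0, hau⟩
  set S : Set ℝ := Icc a t ∩ F ⁻¹' Iic 0 with hSdef
  have hScl : IsClosed S := isClosed_Icc.inter (isClosed_Iic.preimage hFc)
  have hSne : S.Nonempty := ⟨t, ⟨hat.le, le_rfl⟩, hFt⟩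
  have hSbd : BddBelow S := ⟨a, fun s hs => hs.1.1⟩
  set τ : ℝ := sInf S with hτdef
  have hτS : τ ∈ S := hScl.csInf_mem hSne hSbd
  obtain ⟨⟨hτa, hτt⟩, hτF⟩ := hτS
  have hτF : F τ ≤ 0 := hτF
  have haτ : a < τ := by
    rcases lt_or_eq_of_le hτa with h | h
    · exact h
    · exact absurd (h ▸ hτF) (not_le.2 hFa)
  have hposl : ∀ s, a ≤ s → s < τ → 0 < F s := by
    intro s has hsτ
    by_contra hns
    push_neg at hns
    exact absurd (csInf_le hSbd ⟨⟨has, hsτ.le.trans hτt⟩, hns⟩) (not_le.2 hsτ)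
  have hτF0 : F τ = 0 := by
    refine le_antisymm hτF ?_
    have htend : Tendsto F (𝓝[<] τ) (𝓝 (F τ)) := (hFc.tendsto τ).mono_left nhdsWithin_le_nhds
    refine ge_of_tendsto htend ?_
    have h1 : ∀ᶠ s in 𝓝[<] τ, a < s :=
      eventually_nhdsWithin_of_eventually_nhds (eventually_gt_nhds haτ)
    filter_upwards [h1, self_mem_nhdsWithin] with s hs hsτ
    exact (hposl s hs.le hsτ).le
  have hφτ : 0 < φ τ := hφpos τ (le_trans ha0.le hτa) hτF0
  have hneg : ∀ᶠ s in 𝓝[<] τ, F s < 0 := slope_neg_left (hFd τ) hτF0 hφτ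
  have h1 : ∀ᶠ s in 𝓝[<] τ, a < s :=
    eventually_nhdsWithin_of_eventually_nhds (eventually_gt_nhds haτ)
  obtain ⟨s, hsneg, hsa, hsτ⟩ := (hneg.and (h1.and self_mem_nhdsWithin)).exists
  exact absurd (hposl s hsa.le hsτ) (not_lt.2 hsneg.le)
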